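/- Fix an integer J ≥ 2. Let X = {X_t}_{t∈[0,1]} be a random element of C[0,1] that is symmetrically distributed about a = {a_t}_{t∈[0,1]} ∈ C[0,1], i.e., X − a and a − X have the same distribution. Assume moreover that for each t ∈ [0,1] the distribution function of X_t is continuous and a_t is the unique median of X_t. Then MBD has a unique maximum at a: MBD(x) < MBD(a) for every x ∈ C[0,1] with x ≠ a. -/

import Mathlib

set_option synthInstance.maxHeartbeats 400000

open MeasureTheory ENNReal

/-- The unit interval `[0,1]` as a type. -/
abbrev unitI : Type := Set.Icc (0 : ℝ) 1

/-- The modified band depth of `x ∈ C[0,1]` with respect to a probability measure `μ` on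
`C[0,1]`, with `J` independent copies (realized via the product measure `μ^{⊗J}`):
`MBD(x) = ∑_{j=2}^J E[λ({t : min_{1≤i≤j} X_{i,t} ≤ x_t ≤ max_{1≤i≤j} X_{i,t}})]`. -/
noncomputable def modBandDepth [MeasurableSpace C(unitI, ℝ)]
    (μ : Measure C(unitI, ℝ)) [SigmaFinite μ] (J : ℕ) (x : C(unitI, ℝ)) : ℝ :=
  ∑ j ∈ Finset.Icc 2 J, ∫ ω, (volume {t : unitI |
      (∃ i : Fin J, (i : ℕ) < j ∧ ω i t ≤ x t) ∧
      (∃ i : Fin J, (i : ℕ) < j ∧ x t ≤ ω i t)}).toReal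
    ∂(Measure.pi fun _ : Fin J => μ)

/-- The modified half-region depth of `x ∈ C[0,1]` with respect to a probability measure `μ`
on `C[0,1]`: `MHRD(x) = min{ E[λ({t : X_t ≤ x_t})], E[λ({t : X_t ≥ x_t})] }`. -/
noncomputable def modHalfRegionDepth [MeasurableSpace C(unitI, ℝ)]
    (μ : Measure C(unitI, ℝ)) (x : C(unitI, ℝ)) : ℝ :=
  min (∫ z, (volume {t : unitI | z t ≤ x t}).toReal ∂μ)
      (∫ z, (volume {t : unitI | x t ≤ z t}).toReal ∂μ)

/-! ### Auxiliary lemmas -/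

section Aux

-- real key inequality
lemma MBD.real_key {j : ℕ} (hj : 2 ≤ j) {r : ℝ} (h0 : 0 ≤ r) (h1 : r ≤ 1) (hne : r ≠ 1/2) :
    (1/2 : ℝ) ^ j + (1/2) ^ j < (1 - r) ^ j + r ^ j := by
  have sc := strictConvexOn_pow hj
  have h2 := sc.2 (Set.mem_Ici.mpr (by linarith : (0:ℝ) ≤ 1 - r)) (Set.mem_Ici.mpr h0)
    (by intro h; apply hne; linarith : (1 - r) ≠ r)
    (by norm_num : (0:ℝ) < 1/2) (by norm_num : (0:ℝ) < 1/2) (by norm_num)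
  have heq : (1/2 : ℝ) • (1 - r) + (1/2 : ℝ) • r = 1/2 := by rw [smul_eq_mul, smul_eq_mul]; ring
  rw [heq] at h2
  simp only [smul_eq_mul] at h2
  nlinarith [h2]

lemma MBD.enn_one_sub_half : (1 : ℝ≥0∞) - 2⁻¹ = 2⁻¹ := by
  have h2 : (1 : ℝ≥0∞) = 2⁻¹ + 2⁻¹ := by
    rw [← two_mul, ENNReal.mul_inv_cancel (by norm_num) (by norm_num)]
  rw [h2, ENNReal.add_sub_cancel_right (by norm_num)]

lemma MBD.sum_pow_le_one {j : ℕ} (hj : 1 ≤ j) {p : ℝ≥0∞} (hp : p ≤ 1) :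
    (1 - p) ^ j + p ^ j ≤ 1 := by
  have h1 : (1 - p) ^ j ≤ 1 - p := by
    calc (1 - p) ^ j ≤ (1 - p) ^ 1 :=
      pow_le_pow_of_le_one zero_le (tsub_le_self.trans le_rfl) hj
    _ = 1 - p := pow_one _
  have h2 : p ^ j ≤ p := by
    calc p ^ j ≤ p ^ 1 := pow_le_pow_of_le_one zero_le hp hj
    _ = p := pow_one _
  calc (1 - p) ^ j + p ^ j ≤ (1 - p) + p := add_le_add h1 h2
  _ = 1 := tsub_add_cancel_of_le hp

lemma MBD.enn_key_lt {j : ℕ} (hj : 2 ≤ j) {p : ℝ≥0∞} (hp : p ≤ 1) (hne : p ≠ 2⁻¹) :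
    (1 - (2⁻¹ : ℝ≥0∞)) ^ j + (2⁻¹ : ℝ≥0∞) ^ j < (1 - p) ^ j + p ^ j := by
  have hpfin : p ≠ ⊤ := ne_top_of_le_ne_top one_ne_top hp
  have h1pfin : (1 - p) ≠ ⊤ := ne_top_of_le_ne_top one_ne_top tsub_le_self
  have hAfin : (1 - p) ^ j + p ^ j ≠ ⊤ :=
    ENNReal.add_ne_top.mpr ⟨ENNReal.pow_ne_top h1pfin, ENNReal.pow_ne_top hpfin⟩
  have hBfin : (1 - (2⁻¹ : ℝ≥0∞)) ^ j + (2⁻¹ : ℝ≥0∞) ^ j ≠ ⊤ := by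
    rw [MBD.enn_one_sub_half]
    exact ENNReal.add_ne_top.mpr
      ⟨ENNReal.pow_ne_top (by norm_num), ENNReal.pow_ne_top (by norm_num)⟩
  rw [← ENNReal.toReal_lt_toReal hBfin hAfin]
  have hr0 : 0 ≤ p.toReal := ENNReal.toReal_nonneg
  have hr1 : p.toReal ≤ 1 := by
    simpa using ENNReal.toReal_mono one_ne_top hp
  have hrne : p.toReal ≠ 1/2 := by
    intro h
    apply hne
    have : p.toReal = (2⁻¹ : ℝ≥0∞).toReal := by rw [h]; norm_num [ENNReal.toReal_inv]
    exact (ENNReal.toReal_eq_toReal_iff' hpfin (by norm_num)).mp this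
  have hsub : (1 - p).toReal = 1 - p.toReal := by
    rw [ENNReal.toReal_sub_of_le hp one_ne_top, ENNReal.toReal_one]
  rw [ENNReal.toReal_add (ENNReal.pow_ne_top h1pfin) (ENNReal.pow_ne_top hpfin),
    ENNReal.toReal_add (by rw [MBD.enn_one_sub_half]; exact ENNReal.pow_ne_top (by norm_num))
      (ENNReal.pow_ne_top (by norm_num)),
    ENNReal.toReal_pow, ENNReal.toReal_pow, ENNReal.toReal_pow, ENNReal.toReal_pow,
    hsub, MBD.enn_one_sub_half]
  have h12 : (2⁻¹ : ℝ≥0∞).toReal = 1/2 := by norm_num [ENNReal.toReal_inv]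
  rw [h12]
  exact MBD.real_key hj hr0 hr1 hrne

lemma MBD.band_lt {j : ℕ} (hj : 2 ≤ j) {p : ℝ≥0∞} (hp : p ≤ 1) (hne : p ≠ 2⁻¹) :
    1 - ((1 - p) ^ j + p ^ j) < 1 - ((1 - (2⁻¹ : ℝ≥0∞)) ^ j + (2⁻¹ : ℝ≥0∞) ^ j) := by
  have hA : (1 - p) ^ j + p ^ j ≤ 1 := MBD.sum_pow_le_one (le_trans (by norm_num) hj) hp
  exact (AddLECancellable.tsub_lt_tsub_iff_left_of_le (ENNReal.cancel_of_ne one_ne_top)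
    (ENNReal.cancel_of_ne (ne_top_of_le_ne_top one_ne_top hA)) hA).mpr
    (MBD.enn_key_lt hj hp hne)

lemma MBD.band_le {j : ℕ} (hj : 2 ≤ j) {p : ℝ≥0∞} (hp : p ≤ 1) :
    1 - ((1 - p) ^ j + p ^ j) ≤ 1 - ((1 - (2⁻¹ : ℝ≥0∞)) ^ j + (2⁻¹ : ℝ≥0∞) ^ j) := by
  by_cases hne : p = 2⁻¹
  · subst hne; exact le_rfl
  · exact le_of_lt (MBD.band_lt hj hp hne)

lemma MBD.card_filt (J j : ℕ) (hj : j ≤ J) :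
    (Finset.univ.filter fun i : Fin J => (i:ℕ) < j).card = j := by
  have h : (Finset.univ.filter fun i : Fin J => (i:ℕ) < j)
      = Finset.map (Fin.castLEEmb hj) Finset.univ := by
    ext i
    simp only [Finset.mem_filter, Finset.mem_univ, true_and, Finset.mem_map]
    constructor
    · intro h; exact ⟨⟨i, h⟩, by ext; simp [Fin.castLEEmb]⟩
    · rintro ⟨k, -, rfl⟩; simp [Fin.castLEEmb]
  simp [h]

lemma MBD.volume_ne_pos (x a : C(unitI, ℝ)) (hx : x ≠ a) :
    0 < volume {t : unitI | x t ≠ a t} := by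
  set D := {t : unitI | x t ≠ a t} with hD
  have hopen : IsOpen D := by
    have hc : Continuous fun t : unitI => x t - a t := (map_continuous x).sub (map_continuous a)
    have h : D = (fun t : unitI => x t - a t) ⁻¹' ({0}ᶜ) := by
      ext t; simp [hD, sub_eq_zero]
    rw [h]
    exact (isOpen_compl_singleton).preimage hc
  obtain ⟨t0, ht0⟩ : ∃ t : unitI, x t ≠ a t := by
    by_contra h
    push_neg at h
    exact hx (ContinuousMap.ext h)
  obtain ⟨V, hVopen, hVD⟩ := isOpen_induced_iff.mp hopen
  have ht0V : (t0 : ℝ) ∈ V := by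
    have h : t0 ∈ Subtype.val ⁻¹' V := hVD ▸ ht0
    exact h
  have ht0cl : (t0 : ℝ) ∈ closure (Set.Ioo (0:ℝ) 1) := by
    rw [closure_Ioo (by norm_num : (0:ℝ) ≠ 1)]
    exact t0.2
  obtain ⟨w, hwV, hwI⟩ := mem_closure_iff.mp ht0cl V hVopen ht0V
  have hWpos : 0 < volume (V ∩ Set.Ioo (0:ℝ) 1) :=
    (hVopen.inter isOpen_Ioo).measure_pos volume ⟨w, hwV, hwI⟩
  have hvol : volume D = volume (Subtype.val '' D) := by
    have hemb : MeasurableEmbedding (Subtype.val : unitI → ℝ) :=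
      MeasurableEmbedding.subtype_coe measurableSet_Icc
    have h : (volume : Measure unitI) = Measure.comap Subtype.val volume := rfl
    rw [h, hemb.comap_apply]
  have hsub : V ∩ Set.Ioo (0:ℝ) 1 ⊆ Subtype.val '' D := by
    rintro u ⟨huV, huI⟩
    have huIcc : u ∈ Set.Icc (0:ℝ) 1 := Set.Ioo_subset_Icc_self huI
    refine ⟨⟨u, huIcc⟩, ?_, rfl⟩
    have h : (⟨u, huIcc⟩ : unitI) ∈ Subtype.val ⁻¹' V := huV
    exact hVD ▸ h
  calc (0:ℝ≥0∞) < volume (V ∩ Set.Ioo (0:ℝ) 1) := hWpos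
    _ ≤ volume (Subtype.val '' D) := measure_mono hsub
    _ = volume D := hvol.symm

variable [MeasurableSpace C(unitI, ℝ)] [BorelSpace C(unitI, ℝ)]

lemma MBD.meas_eval_const (t : unitI) : Measurable fun z : C(unitI, ℝ) => z t :=
  (ContinuousEvalConst.continuous_eval_const t).measurable

lemma MBD.meas_eval_pair (J : ℕ) (i : Fin J) :
    Measurable fun p : (Fin J → C(unitI, ℝ)) × unitI => p.1 i p.2 := by
  have h1 : Measurable fun p : (Fin J → C(unitI, ℝ)) × unitI => (p.1 i, p.2) :=
    ((measurable_pi_apply i).comp measurable_fst).prodMk measurable_snd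
  have h2 : Continuous fun q : C(unitI, ℝ) × unitI => q.1 q.2 := continuous_eval
  exact h2.measurable.comp h1

lemma MBD.meas_band (J j : ℕ) (x : C(unitI, ℝ)) :
    MeasurableSet {p : (Fin J → C(unitI, ℝ)) × unitI |
      (∃ i : Fin J, (i : ℕ) < j ∧ p.1 i p.2 ≤ x p.2) ∧
      (∃ i : Fin J, (i : ℕ) < j ∧ x p.2 ≤ p.1 i p.2)} := by
  have hx : Measurable fun p : (Fin J → C(unitI, ℝ)) × unitI => x p.2 :=
    (ContinuousMap.continuous x).measurable.comp measurable_snd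
  have h1 : MeasurableSet {p : (Fin J → C(unitI, ℝ)) × unitI |
      ∃ i : Fin J, (i : ℕ) < j ∧ p.1 i p.2 ≤ x p.2} := by
    have h : {p : (Fin J → C(unitI, ℝ)) × unitI | ∃ i : Fin J, (i : ℕ) < j ∧ p.1 i p.2 ≤ x p.2}
        = ⋃ i : Fin J, ⋃ _h : (i : ℕ) < j, {p | p.1 i p.2 ≤ x p.2} := by
      ext p; simp [Set.mem_iUnion]
    rw [h]
    exact MeasurableSet.iUnion fun i => MeasurableSet.iUnion fun _ =>
      measurableSet_le (MBD.meas_eval_pair J i) hx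
  have h2 : MeasurableSet {p : (Fin J → C(unitI, ℝ)) × unitI |
      ∃ i : Fin J, (i : ℕ) < j ∧ x p.2 ≤ p.1 i p.2} := by
    have h : {p : (Fin J → C(unitI, ℝ)) × unitI | ∃ i : Fin J, (i : ℕ) < j ∧ x p.2 ≤ p.1 i p.2}
        = ⋃ i : Fin J, ⋃ _h : (i : ℕ) < j, {p | x p.2 ≤ p.1 i p.2} := by
      ext p; simp [Set.mem_iUnion]
    rw [h]
    exact MeasurableSet.iUnion fun i => MeasurableSet.iUnion fun _ =>
      measurableSet_le hx (MBD.meas_eval_pair J i)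
  exact h1.inter h2

lemma MBD.cylinder (μ : Measure C(unitI, ℝ)) [IsProbabilityMeasure μ]
    (J j : ℕ) (hj : j ≤ J) (t : unitI) (B : Set ℝ) :
    Measure.pi (fun _ : Fin J => μ) {ω | ∀ i : Fin J, (i : ℕ) < j → ω i t ∈ B}
      = μ {z : C(unitI, ℝ) | z t ∈ B} ^ j := by
  classical
  have hset : {ω : Fin J → C(unitI, ℝ) | ∀ i : Fin J, (i : ℕ) < j → ω i t ∈ B}
      = Set.pi Set.univ (fun i : Fin J =>
          if (i : ℕ) < j then {z : C(unitI, ℝ) | z t ∈ B} else Set.univ) := by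
    ext ω
    simp only [Set.mem_setOf_eq, Set.mem_pi, Set.mem_univ, true_implies]
    constructor
    · intro h i; by_cases hi : (i : ℕ) < j <;> simp [hi, h i]
    · intro h i hi; have := h i; simpa [hi] using this
  rw [hset, Measure.pi_pi]
  have h : ∀ i : Fin J, μ (if (i : ℕ) < j then {z : C(unitI, ℝ) | z t ∈ B} else Set.univ)
      = if (i : ℕ) < j then μ {z : C(unitI, ℝ) | z t ∈ B} else 1 := by
    intro i; by_cases hi : (i : ℕ) < j <;> simp [hi]
  simp_rw [h]
  rw [Finset.prod_ite, Finset.prod_const, Finset.prod_const, one_pow, mul_one,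
    MBD.card_filt J j hj]

lemma MBD.F_lt_eq (μ : Measure C(unitI, ℝ)) [IsProbabilityMeasure μ]
    (hcont : ∀ (t : unitI) (c : ℝ), μ {z | z t = c} = 0) (t : unitI) (c : ℝ) :
    μ {z : C(unitI, ℝ) | z t < c} = μ {z : C(unitI, ℝ) | z t ≤ c} := by
  refine le_antisymm (measure_mono fun z hz => le_of_lt (show z t < c from hz)) ?_
  have hsub : {z : C(unitI, ℝ) | z t ≤ c} ⊆ {z | z t < c} ∪ {z | z t = c} := by
    intro z (hz : z t ≤ c); rcases lt_or_eq_of_le hz with h | h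
    · exact Or.inl h
    · exact Or.inr h
  calc μ {z : C(unitI, ℝ) | z t ≤ c} ≤ μ ({z | z t < c} ∪ {z | z t = c}) := measure_mono hsub
    _ ≤ μ {z : C(unitI, ℝ) | z t < c} + μ {z | z t = c} := measure_union_le _ _
    _ = μ {z : C(unitI, ℝ) | z t < c} := by rw [hcont t c, add_zero]

lemma MBD.F_gt_eq (μ : Measure C(unitI, ℝ)) [IsProbabilityMeasure μ] (t : unitI) (c : ℝ) :
    μ {z : C(unitI, ℝ) | c < z t} = 1 - μ {z : C(unitI, ℝ) | z t ≤ c} := by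
  have h : {z : C(unitI, ℝ) | c < z t} = {z : C(unitI, ℝ) | z t ≤ c}ᶜ := by
    ext z; simp [not_le]
  rw [h, prob_compl_eq_one_sub
    (show MeasurableSet {z : C(unitI, ℝ) | z t ≤ c} from (MBD.meas_eval_const t) measurableSet_Iic)]

lemma MBD.F_ge_eq (μ : Measure C(unitI, ℝ)) [IsProbabilityMeasure μ]
    (hcont : ∀ (t : unitI) (c : ℝ), μ {z | z t = c} = 0) (t : unitI) (c : ℝ) :
    μ {z : C(unitI, ℝ) | c ≤ z t} = 1 - μ {z : C(unitI, ℝ) | z t ≤ c} := by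
  have h : {z : C(unitI, ℝ) | c ≤ z t} = {z : C(unitI, ℝ) | z t < c}ᶜ := by
    ext z; simp [not_lt]
  rw [h, prob_compl_eq_one_sub
    (show MeasurableSet {z : C(unitI, ℝ) | z t < c} from (MBD.meas_eval_const t) measurableSet_Iio),
    MBD.F_lt_eq μ hcont]

lemma MBD.meas_band_omega (J j : ℕ) (t : unitI) (c : ℝ) :
    MeasurableSet {ω : Fin J → C(unitI, ℝ) |
      (∃ i : Fin J, (i : ℕ) < j ∧ ω i t ≤ c) ∧ (∃ i : Fin J, (i : ℕ) < j ∧ c ≤ ω i t)} := by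
  have hev : ∀ i : Fin J, Measurable fun ω : Fin J → C(unitI, ℝ) => ω i t :=
    fun i => (MBD.meas_eval_const t).comp (measurable_pi_apply i)
  have h1 : MeasurableSet {ω : Fin J → C(unitI, ℝ) | ∃ i : Fin J, (i : ℕ) < j ∧ ω i t ≤ c} := by
    have h : {ω : Fin J → C(unitI, ℝ) | ∃ i : Fin J, (i : ℕ) < j ∧ ω i t ≤ c}
        = ⋃ i : Fin J, ⋃ _h : (i : ℕ) < j, {ω | ω i t ≤ c} := by
      ext ω; simp [Set.mem_iUnion]
    rw [h]
    exact MeasurableSet.iUnion fun i => MeasurableSet.iUnion fun _ =>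
      measurableSet_le (hev i) measurable_const
  have h2 : MeasurableSet {ω : Fin J → C(unitI, ℝ) | ∃ i : Fin J, (i : ℕ) < j ∧ c ≤ ω i t} := by
    have h : {ω : Fin J → C(unitI, ℝ) | ∃ i : Fin J, (i : ℕ) < j ∧ c ≤ ω i t}
        = ⋃ i : Fin J, ⋃ _h : (i : ℕ) < j, {ω | c ≤ ω i t} := by
      ext ω; simp [Set.mem_iUnion]
    rw [h]
    exact MeasurableSet.iUnion fun i => MeasurableSet.iUnion fun _ =>
      measurableSet_le measurable_const (hev i)
  exact h1.inter h2

lemma MBD.section_prob (μ : Measure C(unitI, ℝ)) [IsProbabilityMeasure μ]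
    (hcont : ∀ (t : unitI) (c : ℝ), μ {z | z t = c} = 0)
    (J j : ℕ) (hj2 : 2 ≤ j) (hjJ : j ≤ J) (t : unitI) (c : ℝ) :
    Measure.pi (fun _ : Fin J => μ) {ω : Fin J → C(unitI, ℝ) |
        (∃ i : Fin J, (i : ℕ) < j ∧ ω i t ≤ c) ∧ (∃ i : Fin J, (i : ℕ) < j ∧ c ≤ ω i t)}
      = 1 - ((1 - μ {z : C(unitI, ℝ) | z t ≤ c}) ^ j
          + (μ {z : C(unitI, ℝ) | z t ≤ c}) ^ j) := by
  set π := Measure.pi (fun _ : Fin J => μ) with hπ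
  set Band := {ω : Fin J → C(unitI, ℝ) |
      (∃ i : Fin J, (i : ℕ) < j ∧ ω i t ≤ c) ∧ (∃ i : Fin J, (i : ℕ) < j ∧ c ≤ ω i t)} with hBand
  set A := {ω : Fin J → C(unitI, ℝ) | ∀ i : Fin J, (i : ℕ) < j → ω i t ∈ Set.Ioi c} with hA
  set B := {ω : Fin J → C(unitI, ℝ) | ∀ i : Fin J, (i : ℕ) < j → ω i t ∈ Set.Iio c} with hB
  have hcompl : Bandᶜ = A ∪ B := by
    ext ω
    simp only [hBand, hA, hB, Set.mem_compl_iff, Set.mem_setOf_eq, Set.mem_union,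
      Set.mem_Ioi, Set.mem_Iio, not_and_or]
    push_neg
    constructor
    · rintro (h | h)
      · exact Or.inl fun i hi => (h i hi)
      · exact Or.inr fun i hi => (h i hi)
    · rintro (h | h)
      · exact Or.inl fun i hi => (h i hi)
      · exact Or.inr fun i hi => (h i hi)
  have hdisj : Disjoint A B := by
    rw [Set.disjoint_left]
    intro ω hωA hωB
    have h0j : (0 : ℕ) < j := by omega
    have h0J : (0 : ℕ) < J := by omega
    have h1 := hωA ⟨0, h0J⟩ h0j
    have h2 := hωB ⟨0, h0J⟩ h0j
    exact absurd (lt_trans (Set.mem_Ioi.mp h1) (Set.mem_Iio.mp h2)) (lt_irrefl _)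
  have hmeasB : MeasurableSet B := by
    have h : B = ⋂ i : Fin J, ⋂ _h : (i : ℕ) < j, {ω : Fin J → C(unitI, ℝ) | ω i t < c} := by
      ext ω; simp [hB, Set.mem_iInter]
    rw [h]
    exact MeasurableSet.iInter fun i => MeasurableSet.iInter fun _ =>
      measurableSet_lt ((MBD.meas_eval_const t).comp (measurable_pi_apply i)) measurable_const
  have hmeasBand : MeasurableSet Band := MBD.meas_band_omega J j t c
  have hsum : π Band + π Bandᶜ = 1 := prob_add_prob_compl hmeasBand
  have hBand_eq : π Band = 1 - π Bandᶜ :=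
    ENNReal.eq_sub_of_add_eq (measure_ne_top _ _) hsum
  rw [hBand_eq, hcompl, measure_union hdisj hmeasB]
  have hCA : π A = (1 - μ {z : C(unitI, ℝ) | z t ≤ c}) ^ j := by
    rw [hπ, hA, MBD.cylinder μ J j hjJ t (Set.Ioi c)]
    congr 1
    have h : {z : C(unitI, ℝ) | z t ∈ Set.Ioi c} = {z : C(unitI, ℝ) | c < z t} := rfl
    rw [h, MBD.F_gt_eq μ t c]
  have hCB : π B = (μ {z : C(unitI, ℝ) | z t ≤ c}) ^ j := by
    rw [hπ, hB, MBD.cylinder μ J j hjJ t (Set.Iio c)]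
    congr 1
    have h : {z : C(unitI, ℝ) | z t ∈ Set.Iio c} = {z : C(unitI, ℝ) | z t < c} := rfl
    rw [h, MBD.F_lt_eq μ hcont t c]
  rw [hCA, hCB]

lemma MBD.median_at_a (μ : Measure C(unitI, ℝ)) [IsProbabilityMeasure μ] (a : C(unitI, ℝ))
    (hsym : μ.map (fun z => z - a) = μ.map (fun z => a - z))
    (hcont : ∀ (t : unitI) (c : ℝ), μ {z | z t = c} = 0) (t : unitI) :
    μ {z : C(unitI, ℝ) | z t ≤ a t} = 2⁻¹ := by
  have hm1 : Measurable fun z : C(unitI, ℝ) => z - a :=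
    (continuous_id.sub continuous_const).measurable
  have hm2 : Measurable fun z : C(unitI, ℝ) => a - z :=
    (continuous_const.sub continuous_id).measurable
  have hms : MeasurableSet {w : C(unitI, ℝ) | w t ≤ 0} :=
    (MBD.meas_eval_const t) measurableSet_Iic
  have h1 : μ.map (fun z => z - a) {w : C(unitI, ℝ) | w t ≤ 0}
      = μ {z : C(unitI, ℝ) | z t ≤ a t} := by
    rw [Measure.map_apply hm1 hms]
    congr 1
    ext z
    simp [ContinuousMap.sub_apply, sub_nonpos]
  have h2 : μ.map (fun z => a - z) {w : C(unitI, ℝ) | w t ≤ 0}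
      = μ {z : C(unitI, ℝ) | a t ≤ z t} := by
    rw [Measure.map_apply hm2 hms]
    congr 1
    ext z
    simp [ContinuousMap.sub_apply, sub_nonpos]
  have heq : μ {z : C(unitI, ℝ) | z t ≤ a t} = μ {z : C(unitI, ℝ) | a t ≤ z t} := by
    rw [← h1, ← h2, hsym]
  have hunion : {z : C(unitI, ℝ) | z t ≤ a t} ∪ {z : C(unitI, ℝ) | a t ≤ z t} = Set.univ := by
    ext z; simpa using le_total (z t) (a t)
  have hinter : {z : C(unitI, ℝ) | z t ≤ a t} ∩ {z : C(unitI, ℝ) | a t ≤ z t}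
      = {z : C(unitI, ℝ) | z t = a t} := by
    ext z
    simp only [Set.mem_inter_iff, Set.mem_setOf_eq]
    exact ⟨fun ⟨h, h'⟩ => le_antisymm h h', fun h => ⟨le_of_eq h, ge_of_eq h⟩⟩
  have hms2 : MeasurableSet {z : C(unitI, ℝ) | a t ≤ z t} := by
    exact (MBD.meas_eval_const t) measurableSet_Ici
  have hadd := measure_union_add_inter (μ := μ) {z : C(unitI, ℝ) | z t ≤ a t} hms2
  rw [hunion, hinter, hcont t (a t), add_zero, measure_univ, ← heq, ← two_mul] at hadd
  have h : μ {z : C(unitI, ℝ) | z t ≤ a t} = 1 / 2 :=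
    (ENNReal.eq_div_iff (by norm_num) (by norm_num)).mpr hadd.symm
  rw [h, one_div]

end Aux


/-- If a random element `X` of `C[0,1]` with law `μ` is symmetrically distributed about
`a ∈ C[0,1]` (i.e. `X − a` and `a − X` have the same distribution), each `X_t` has a
continuous distribution function, and `a_t` is the unique median of `X_t` for each `t`,
then the modified band depth has a unique maximum at `a`. -/
theorem modBandDepth_unique_max
    [MeasurableSpace C(unitI, ℝ)] [BorelSpace C(unitI, ℝ)]
    (J : ℕ) (hJ : 2 ≤ J)
    (μ : Measure C(unitI, ℝ)) [IsProbabilityMeasure μ]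
    (a : C(unitI, ℝ))
    (hsym : μ.map (fun z => z - a) = μ.map (fun z => a - z))
    (hcont : ∀ (t : unitI) (c : ℝ), μ {z | z t = c} = 0)
    (hmed : ∀ (t : unitI) (m : ℝ),
      2⁻¹ ≤ μ {z | z t ≤ m} → 2⁻¹ ≤ μ {z | m ≤ z t} → m = a t) :
    ∀ x : C(unitI, ℝ), x ≠ a → modBandDepth μ J x < modBandDepth μ J a := by
  intro x hx
  unfold modBandDepth
  set π := Measure.pi fun _ : Fin J => μ with hπ
  refine Finset.sum_lt_sum_of_nonempty ⟨2, Finset.mem_Icc.mpr ⟨le_rfl, hJ⟩⟩ ?_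
  intro j hj
  obtain ⟨hj2, hjJ⟩ := Finset.mem_Icc.mp hj
  -- the joint set in (Fin J → C) × unitI
  set S : C(unitI, ℝ) → Set ((Fin J → C(unitI, ℝ)) × unitI) := fun y =>
    {p | (∃ i : Fin J, (i : ℕ) < j ∧ p.1 i p.2 ≤ y p.2) ∧
         (∃ i : Fin J, (i : ℕ) < j ∧ y p.2 ≤ p.1 i p.2)} with hS
  have hSmeas : ∀ y, MeasurableSet (S y) := fun y => MBD.meas_band J j y
  -- band depth term as measure of joint set
  have hterm : ∀ y : C(unitI, ℝ),
      (∫ ω, (volume {t : unitI |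
        (∃ i : Fin J, (i : ℕ) < j ∧ ω i t ≤ y t) ∧
        (∃ i : Fin J, (i : ℕ) < j ∧ y t ≤ ω i t)}).toReal ∂π)
      = ((π.prod volume) (S y)).toReal := by
    intro y
    have hmble : AEMeasurable (fun ω : Fin J → C(unitI, ℝ) => volume {t : unitI |
        (∃ i : Fin J, (i : ℕ) < j ∧ ω i t ≤ y t) ∧
        (∃ i : Fin J, (i : ℕ) < j ∧ y t ≤ ω i t)}) π :=
      (measurable_measure_prodMk_left (hSmeas y)).aemeasurable
    rw [integral_toReal hmble (Filter.Eventually.of_forall fun ω => measure_lt_top _ _)]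
    congr 1
    rw [Measure.prod_apply (hSmeas y)]
    rfl
  -- slicing in t
  have hsect : ∀ y : C(unitI, ℝ), (π.prod volume) (S y)
      = ∫⁻ t : unitI, π {ω : Fin J → C(unitI, ℝ) |
          (∃ i : Fin J, (i : ℕ) < j ∧ ω i t ≤ y t) ∧
          (∃ i : Fin J, (i : ℕ) < j ∧ y t ≤ ω i t)} ∂volume := by
    intro y
    rw [Measure.prod_apply_symm (hSmeas y)]
    rfl
  -- the constant value at a
  set cj : ℝ≥0∞ := 1 - ((1 - (2⁻¹ : ℝ≥0∞)) ^ j + (2⁻¹ : ℝ≥0∞) ^ j) with hcj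
  have hsec_a : ∀ t : unitI, π {ω : Fin J → C(unitI, ℝ) |
      (∃ i : Fin J, (i : ℕ) < j ∧ ω i t ≤ a t) ∧
      (∃ i : Fin J, (i : ℕ) < j ∧ a t ≤ ω i t)} = cj := by
    intro t
    rw [hπ, MBD.section_prob μ hcont J j hj2 hjJ t (a t),
      MBD.median_at_a μ a hsym hcont t]
  -- the section function for x
  set f : unitI → ℝ≥0∞ := fun t => π {ω : Fin J → C(unitI, ℝ) |
      (∃ i : Fin J, (i : ℕ) < j ∧ ω i t ≤ x t) ∧
      (∃ i : Fin J, (i : ℕ) < j ∧ x t ≤ ω i t)} with hf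
  have hfmeas : Measurable f := by
    have h := measurable_measure_prodMk_right (μ := π) (hSmeas x)
    exact h
  have hsec_x : ∀ t : unitI, f t
      = 1 - ((1 - μ {z : C(unitI, ℝ) | z t ≤ x t}) ^ j
          + (μ {z : C(unitI, ℝ) | z t ≤ x t}) ^ j) := by
    intro t
    rw [hf, hπ]
    exact MBD.section_prob μ hcont J j hj2 hjJ t (x t)
  have hfle : ∀ t, f t ≤ cj := by
    intro t
    rw [hsec_x t, hcj]
    exact MBD.band_le hj2 prob_le_one
  have hFne : ∀ t : unitI, x t ≠ a t → μ {z : C(unitI, ℝ) | z t ≤ x t} ≠ 2⁻¹ := by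
    intro t hne heq
    apply hne
    refine hmed t (x t) (le_of_eq heq.symm) ?_
    rw [MBD.F_ge_eq μ hcont t (x t), heq, MBD.enn_one_sub_half]
  have hflt : ∀ t : unitI, x t ≠ a t → f t < cj := by
    intro t hne
    rw [hsec_x t, hcj]
    exact MBD.band_lt hj2 prob_le_one (hFne t hne)
  -- the gap function
  set g : unitI → ℝ≥0∞ := fun t => cj - f t with hg
  have hgmeas : Measurable g := measurable_const.sub hfmeas
  have hgpos : 0 < ∫⁻ t, g t ∂volume := by
    rw [lintegral_pos_iff_support hgmeas]
    refine lt_of_lt_of_le (MBD.volume_ne_pos x a hx) (measure_mono ?_)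
    intro t ht
    simp only [Function.mem_support, hg]
    exact ne_of_gt (tsub_pos_of_lt (hflt t ht))
  have hconst : (∫⁻ (_t : unitI), cj ∂volume) = cj := by
    rw [lintegral_const, measure_univ, mul_one]
  have hcjle : cj ≤ 1 := by rw [hcj]; exact tsub_le_self
  have hffin : (∫⁻ t, f t ∂volume) ≠ ⊤ := by
    refine ne_top_of_le_ne_top one_ne_top ?_
    calc (∫⁻ t, f t ∂volume) ≤ ∫⁻ (_t : unitI), cj ∂volume := lintegral_mono hfle
      _ = cj := hconst
      _ ≤ 1 := hcjle
  have hsplit : (∫⁻ t, f t ∂volume) + (∫⁻ t, g t ∂volume) = cj := by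
    rw [← lintegral_add_left hfmeas g]
    have h : ∀ t : unitI, f t + g t = cj := fun t => add_tsub_cancel_of_le (hfle t)
    calc (∫⁻ t, f t + g t ∂volume) = ∫⁻ (_t : unitI), cj ∂volume :=
      lintegral_congr fun t => h t
    _ = cj := hconst
  have hmain : (∫⁻ t, f t ∂volume) < cj := by
    rw [← hsplit]
    exact ENNReal.lt_add_right hffin (ne_of_gt hgpos)
  -- put it together
  rw [hterm x, hterm a]
  have hxval : (π.prod volume) (S x) = ∫⁻ t, f t ∂volume := hsect x
  have haval : (π.prod volume) (S a) = cj := by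
    rw [hsect a]
    calc (∫⁻ t, π {ω : Fin J → C(unitI, ℝ) |
        (∃ i : Fin J, (i : ℕ) < j ∧ ω i t ≤ a t) ∧
        (∃ i : Fin J, (i : ℕ) < j ∧ a t ≤ ω i t)} ∂volume)
        = ∫⁻ (_t : unitI), cj ∂volume := lintegral_congr fun t => hsec_a t
      _ = cj := hconst
  rw [hxval, haval]
  exact (ENNReal.toReal_lt_toReal hffin (ne_top_of_le_ne_top one_ne_top hcjle)).mpr hmain
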